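/- The trace of the in-forest matrix Q_k equals (n−k)σ_k for every k, reflecting that each in-forest with k arcs has exactly n−k roots. -/

import Mathlib

open Matrix Finset Polynomial

/-- `A` is (the arc set of) an in-forest of the weighted digraph with arc-weight
matrix `W`: all arcs are loopless arcs of positive weight, every vertex has
outdegree at most one, and there are no directed cycles. -/
def IsInForest {n : ℕ} (W : Matrix (Fin n) (Fin n) ℝ)
    (A : Finset (Fin n × Fin n)) : Prop :=
  (∀ e ∈ A, e.1 ≠ e.2 ∧ 0 < W e.1 e.2) ∧
  (∀ i : Fin n, (A.filter (fun e => e.1 = i)).card ≤ 1) ∧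
  (∀ i : Fin n, ¬ Relation.TransGen (fun a b => (a, b) ∈ A) i i)

/-- The weight of a forest: the product of its arc weights. -/
def forestWeight {n : ℕ} (W : Matrix (Fin n) (Fin n) ℝ)
    (A : Finset (Fin n × Fin n)) : ℝ :=
  ∏ e ∈ A, W e.1 e.2

/-- `i` belongs to the tree of the forest `A` converging to (rooted at) `j`. -/
def InTreeRootedAt {n : ℕ} (A : Finset (Fin n × Fin n)) (i j : Fin n) : Prop :=
  Relation.ReflTransGen (fun a b => (a, b) ∈ A) i j ∧ ∀ e ∈ A, e.1 ≠ j

open scoped Classical in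
/-- `σ_k`: the total weight of in-forests with `k` arcs. -/
noncomputable def sigmaW {n : ℕ} (W : Matrix (Fin n) (Fin n) ℝ) (k : ℕ) : ℝ :=
  ∑ A ∈ Finset.univ.powerset.filter
      (fun A => IsInForest W A ∧ A.card = k), forestWeight W A

open scoped Classical in
/-- `Q_k`: the matrix of in-forests with `k` arcs; its `(i,j)` entry is the total
weight of in-forests with `k` arcs in which `i` belongs to a tree rooted at `j`. -/
noncomputable def forestMatrix {n : ℕ} (W : Matrix (Fin n) (Fin n) ℝ) (k : ℕ) :
    Matrix (Fin n) (Fin n) ℝ :=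
  Matrix.of fun i j =>
    ∑ A ∈ Finset.univ.powerset.filter
        (fun A => IsInForest W A ∧ A.card = k ∧ InTreeRootedAt A i j),
      forestWeight W A

open scoped Classical in
/-- `σ`: the total weight of all in-forests. -/
noncomputable def sigmaTot {n : ℕ} (W : Matrix (Fin n) (Fin n) ℝ) : ℝ :=
  ∑ A ∈ Finset.univ.powerset.filter (fun A => IsInForest W A), forestWeight W A

open scoped Classical in
/-- `Q`: the matrix of all in-forests. -/
noncomputable def forestMatrixTot {n : ℕ} (W : Matrix (Fin n) (Fin n) ℝ) :
    Matrix (Fin n) (Fin n) ℝ :=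
  Matrix.of fun i j =>
    ∑ A ∈ Finset.univ.powerset.filter
        (fun A => IsInForest W A ∧ InTreeRootedAt A i j), forestWeight W A

open scoped Classical in
/-- The number of arcs in a maximum in-forest (equal to `n - d` where `d` is the
in-forest dimension). -/
noncomputable def maxForestCard {n : ℕ} (W : Matrix (Fin n) (Fin n) ℝ) : ℕ :=
  (Finset.univ.powerset.filter (fun A => IsInForest W A)).sup Finset.card

/-- The in-forest dimension `d` of the digraph. -/
noncomputable def forestDim {n : ℕ} (W : Matrix (Fin n) (Fin n) ℝ) : ℕ :=
  n - maxForestCard W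

/-- The (row) Laplacian matrix of the weighted digraph with arc-weight matrix `W`. -/
def lap {n : ℕ} (W : Matrix (Fin n) (Fin n) ℝ) : Matrix (Fin n) (Fin n) ℝ :=
  Matrix.diagonal (fun i => ∑ j, W i j) - W

/-- `J̃`: the normalized matrix of maximum in-forests. -/
noncomputable def Jtilde {n : ℕ} (W : Matrix (Fin n) (Fin n) ℝ) :
    Matrix (Fin n) (Fin n) ℝ :=
  (sigmaW W (maxForestCard W))⁻¹ • forestMatrix W (maxForestCard W)

/-- `tr Q_k = (n − k) σ_k` for every `k`. -/
theorem trace_forestMatrix {n : ℕ} (W : Matrix (Fin n) (Fin n) ℝ)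
    (hn : 1 < n) (hW : ∀ i j, 0 ≤ W i j) (hdiag : ∀ i, W i i = 0) :
    ∀ k : ℕ, (forestMatrix W k).trace = ((n - k : ℕ) : ℝ) * sigmaW W k := by
  classical
  intro k
  set S := Finset.univ.powerset.filter
      (fun A : Finset (Fin n × Fin n) => IsInForest W A ∧ A.card = k) with hS
  have key : ∀ A ∈ S,
      (Finset.univ.filter (fun i : Fin n => InTreeRootedAt A i i)).card = n - k := by
    intro A hA
    rw [hS, Finset.mem_filter] at hA
    obtain ⟨-, hF, hk⟩ := hA
    have hinj : Set.InjOn Prod.fst (A : Set (Fin n × Fin n)) := by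
      intro e₁ h₁ e₂ h₂ he
      by_contra hne
      have h2 : 1 < (A.filter (fun e => e.1 = e₁.1)).card := by
        refine Finset.one_lt_card.2 ⟨e₁, ?_, e₂, ?_, hne⟩ <;>
          simp_all [Finset.mem_filter]
      exact absurd (hF.2.1 e₁.1) (by omega)
    have himg : (A.image Prod.fst).card = k := by
      rw [Finset.card_image_of_injOn hinj, hk]
    have hset : (Finset.univ.filter (fun i : Fin n => InTreeRootedAt A i i))
        = Finset.univ \ A.image Prod.fst := by
      ext i
      rw [Finset.mem_filter, Finset.mem_sdiff]
      simp only [Finset.mem_filter, Finset.mem_univ, true_and, Finset.mem_sdiff,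
        Finset.mem_image, InTreeRootedAt]
      constructor
      · rintro ⟨-, h⟩ ⟨e, he, hei⟩
        exact h e he hei
      · intro h
        exact ⟨Relation.ReflTransGen.refl, fun e he hei => h ⟨e, he, hei⟩⟩
    rw [hset, Finset.card_sdiff_of_subset (Finset.subset_univ _), himg, Finset.card_univ,
      Fintype.card_fin]
  have h1 : (forestMatrix W k).trace
      = ∑ i : Fin n, ∑ A ∈ Finset.univ.powerset.filter
          (fun A => IsInForest W A ∧ A.card = k ∧ InTreeRootedAt A i i),
          forestWeight W A := rfl
  have h2 : ∀ i : Fin n, Finset.univ.powerset.filter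
      (fun A : Finset (Fin n × Fin n) => IsInForest W A ∧ A.card = k ∧ InTreeRootedAt A i i)
      = S.filter (fun A => InTreeRootedAt A i i) := by
    intro i
    rw [hS, Finset.filter_filter]
    exact Finset.filter_congr (fun A _ => by tauto)
  calc (forestMatrix W k).trace
      = ∑ i : Fin n, ∑ A ∈ S, if InTreeRootedAt A i i then forestWeight W A else 0 := by
        rw [h1]; exact Finset.sum_congr rfl fun i _ => by rw [h2 i, Finset.sum_filter]
    _ = ∑ A ∈ S, ∑ i : Fin n, if InTreeRootedAt A i i then forestWeight W A else 0 :=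
        Finset.sum_comm
    _ = ∑ A ∈ S, ((n - k : ℕ) : ℝ) * forestWeight W A := by
        refine Finset.sum_congr rfl fun A hA => ?_
        rw [← Finset.sum_filter, Finset.sum_const, key A hA, nsmul_eq_mul]
    _ = ((n - k : ℕ) : ℝ) * sigmaW W k := by
        rw [sigmaW, ← Finset.mul_sum]
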